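/- Let X = ℝ₊ be the set of positive real numbers and let R : X³ → X³ be the electric network map R(x,y,z) = ( x·y/(x+z+x·y·z), x+z+x·y·z, z·y/(x+z+x·y·z) ). Then R is an involution, R ∘ R = Id, and R is reversible, i.e. τ₁₃ ∘ R ∘ τ₁₃ ∘ R = Id, where τ₁₃(x,y,z) = (z,y,x). -/
import Mathlib


/-- The positive real numbers. -/
abbrev PReal : Type := {x : ℝ // 0 < x}

/-- The electric network map on positive reals. -/
noncomputable def electricMap : PReal × PReal × PReal → PReal × PReal × PReal :=
  fun (⟨x, hx⟩, ⟨y, hy⟩, ⟨z, hz⟩) =>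
    (⟨x * y / (x + z + x * y * z), by positivity⟩,
     ⟨x + z + x * y * z, by positivity⟩,
     ⟨z * y / (x + z + x * y * z), by positivity⟩)

/-- The permutation of the first and third components of a triple. -/
def tau13 {X : Type*} : X × X × X → X × X × X := fun (x, y, z) => (z, y, x)

lemma electricMap_sq (p : PReal × PReal × PReal) : electricMap (electricMap p) = p := by
  obtain ⟨⟨x, hx⟩, ⟨y, hy⟩, ⟨z, hz⟩⟩ := p
  have hS : (0:ℝ) < x + z + x * y * z := by positivity
  simp only [electricMap, Prod.mk.injEq, Subtype.mk.injEq]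
  refine ⟨?_, ?_, ?_⟩ <;> field_simp <;> ring

lemma tau13_electricMap (p : PReal × PReal × PReal) :
    tau13 (electricMap p) = electricMap (tau13 p) := by
  obtain ⟨⟨x, hx⟩, ⟨y, hy⟩, ⟨z, hz⟩⟩ := p
  simp only [electricMap, tau13, Prod.mk.injEq, Subtype.mk.injEq]
  refine ⟨?_, ?_, ?_⟩ <;> ring_nf

/-- the electric network map is an involution and is reversible. -/
theorem electricMap_involution_reversible :
    (electricMap ∘ electricMap = id) ∧
    (tau13 ∘ electricMap ∘ tau13 ∘ electricMap = id) := by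
  constructor
  · funext p; exact electricMap_sq p
  · funext p
    simp only [Function.comp_apply, id_eq]
    rw [← tau13_electricMap (electricMap p)]
    show tau13 (tau13 (electricMap (electricMap p))) = p
    rw [electricMap_sq]
    obtain ⟨a, b, c⟩ := p
    rfl
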